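/- Let k > 1 and let f be a good function of order k, i.e., f is defined recursively by f(M_i, N_i) = f(M_{i+1}, N_{i+1}) + 1 where M_{i+1} = M_i − k·⌈M_i/N_i⌉, N_{i+1} = N_i − 1, and f(x, y) = 0 when x ≤ 0 or y ≤ 0. Then for all non-negative integers n, x, y with x and y multiples of k, k ≤ n, and x ≥ y, we have f(x, n) ≥ f(y, n). -/

import Mathlib

private lemma step_self_zero (k M : ℤ) (hk : 0 < k) (hkM : k ∣ M) :
    M - k * ⌈(M : ℚ) / (k : ℚ)⌉ = 0 := by
  obtain ⟨c, rfl⟩ := hkM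
  have hk0 : (k : ℚ) ≠ 0 := by exact_mod_cast hk.ne'
  have : ((k * c : ℤ) : ℚ) / (k : ℚ) = (c : ℚ) := by
    push_cast
    field_simp
  rw [this, Int.ceil_intCast]
  ring

private lemma step_mono (k N x y : ℤ) (hk : 0 < k) (hN : k ≤ N)
    (hkx : k ∣ x) (hky : k ∣ y) (hyx : y ≤ x) :
    y - k * ⌈(y : ℚ) / (N : ℚ)⌉ ≤ x - k * ⌈(x : ℚ) / (N : ℚ)⌉ := by
  have hN0 : 0 < N := lt_of_lt_of_le hk hN
  obtain ⟨t, ht⟩ : k ∣ (x - y) := dvd_sub hkx hky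
  have ht0 : 0 ≤ t := by nlinarith
  have hNQ : (0 : ℚ) < (N : ℚ) := by exact_mod_cast hN0
  have hdiv : (x : ℚ) / (N : ℚ) ≤ (y : ℚ) / (N : ℚ) + (t : ℚ) := by
    rw [div_add' _ _ _ hNQ.ne', div_le_div_iff_of_pos_right hNQ]
    have hx : (x : ℚ) = (y : ℚ) + (k : ℚ) * (t : ℚ) := by
      have : x = y + k * t := by linarith
      exact_mod_cast this
    have hkN : (k : ℚ) ≤ (N : ℚ) := by exact_mod_cast hN
    have ht0' : (0 : ℚ) ≤ (t : ℚ) := by exact_mod_cast ht0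
    nlinarith
  have hceil : ⌈(x : ℚ) / (N : ℚ)⌉ ≤ ⌈(y : ℚ) / (N : ℚ)⌉ + t := by
    calc ⌈(x : ℚ) / (N : ℚ)⌉ ≤ ⌈(y : ℚ) / (N : ℚ) + (t : ℚ)⌉ := Int.ceil_le_ceil hdiv
      _ = ⌈(y : ℚ) / (N : ℚ)⌉ + t := Int.ceil_add_intCast _ _
  have := mul_le_mul_of_nonneg_left hceil hk.le
  have hx : x = y + k * t := by linarith
  nlinarith

/-- Monotonicity of a good function of order `k` in its first argument
(both arguments multiples of `k`, second argument at least `k`). -/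
theorem good_function_monotone (k : ℤ) (hk : 1 < k) (f : ℤ → ℤ → ℤ)
    (hnonneg : ∀ M N, 0 ≤ f M N)
    (hzero : ∀ M N : ℤ, M ≤ 0 ∨ N ≤ 0 → f M N = 0)
    (hrec : ∀ M N : ℤ, 0 < M → 0 < N →
      f M N = f (M - k * ⌈(M : ℚ) / (N : ℚ)⌉) (N - 1) + 1) :
    ∀ n x y : ℤ, 0 ≤ x → 0 ≤ y → k ∣ x → k ∣ y → k ≤ n → y ≤ x → f y n ≤ f x n := by
  have hk0 : (0 : ℤ) < k := lt_trans one_pos hk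
  have main : ∀ n, k ≤ n → ∀ x y : ℤ, 0 ≤ x → 0 ≤ y → k ∣ x → k ∣ y → y ≤ x →
      f y n ≤ f x n := by
    intro n hn
    refine Int.le_induction (motive := fun n _ => ∀ x y : ℤ, 0 ≤ x → 0 ≤ y → k ∣ x → k ∣ y → y ≤ x → f y n ≤ f x n) ?_ ?_ n hn
    · intro x y hx hy hkx hky hyx
      rcases eq_or_lt_of_le hy with hy0 | hy0
      · rw [hzero y k (Or.inl hy0.symm.le)]
        exact hnonneg x k
      · have hx0 : 0 < x := lt_of_lt_of_le hy0 hyx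
        rw [hrec y k hy0 hk0, hrec x k hx0 hk0,
          step_self_zero k y hk0 hky, step_self_zero k x hk0 hkx]
    · intro n hn ih x y hx hy hkx hky hyx
      rcases eq_or_lt_of_le hy with hy0 | hy0
      · rw [hzero y (n + 1) (Or.inl hy0.symm.le)]
        exact hnonneg x (n + 1)
      · have hx0 : 0 < x := lt_of_lt_of_le hy0 hyx
        have hn0 : (0 : ℤ) < n + 1 := by linarith
        rw [hrec y (n + 1) hy0 hn0, hrec x (n + 1) hx0 hn0]
        have hmono := step_mono k (n + 1) x y hk0 (by linarith) hkx hky hyx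
        set y' := y - k * ⌈(y : ℚ) / ((n + 1 : ℤ) : ℚ)⌉ with hy'
        set x' := x - k * ⌈(x : ℚ) / ((n + 1 : ℤ) : ℚ)⌉ with hx'
        have hky' : k ∣ y' := dvd_sub hky (Dvd.intro _ rfl)
        have hkx' : k ∣ x' := dvd_sub hkx (Dvd.intro _ rfl)
        rcases le_or_gt y' 0 with h | h
        · rw [hzero y' (n + 1 - 1) (Or.inl h)]
          simpa using add_le_add_right (hnonneg x' (n + 1 - 1)) 1
        · have := ih x' y' (le_trans h.le hmono) h.le hkx' hky' hmono
          simpa using add_le_add_right this 1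
  intro n x y hx hy hkx hky hkn hyx
  exact main n hkn x y hx hy hkx hky hyx
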